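/- Let f(x) = 2x⁶ + x + 2, A = ℚ[x]/(f) with ring of integers O whose class group is ℤ/2ℤ generated by the class of a prime above 2, with both primes 𝔭, 𝔮 above 2 non-principal and 2O = 𝔭𝔮⁵. Then there is no u ∈ A* which is a {2}-unit (i.e., supported only on primes above 2 and units) with N_{A/ℚ}(u) ∈ 2·(ℚ*)². -/

import Mathlib

open Polynomial NumberField
open scoped nonZeroDivisors

lemma padicValRat_two_self : padicValRat 2 (2 : ℚ) = 1 := by
  have := padicValRat.self (p := 2) one_lt_two
  norm_num at this
  exact this

lemma padicValRat_two_zpow (n : ℤ) : padicValRat 2 ((2 : ℚ) ^ n) = n := by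
  induction n using Int.induction_on with
  | zero => simp
  | succ m ih =>
      rw [zpow_add_one₀ (by norm_num), padicValRat.mul (by positivity) (by norm_num), ih,
        padicValRat_two_self]
  | pred m ih =>
      rw [zpow_sub_one₀ (by norm_num), padicValRat.mul (by positivity) (by norm_num), ih,
        padicValRat.inv, padicValRat_two_self]
      ring

/-- for A = ℚ[x]/(2x⁶+x+2) (presented as the number field K = ℚ(θ)),
with class group of order 2, 2·O = 𝔭𝔮⁵ with 𝔭, 𝔮 non-principal primes of norm 2,
there is no {2}-unit u ∈ A* (fractional ideal supported on 𝔭, 𝔮) whose norm lies in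
2·(ℚ*)². -/
theorem stmt_16 (K : Type*) [Field K] [NumberField K] (θ : K)
    (hθ : aeval θ (2 * X ^ 6 + X + 2 : ℚ[X]) = 0)
    (hgen : IntermediateField.adjoin ℚ {θ} = ⊤)
    (𝔭 𝔮 : Ideal (𝓞 K)) (h𝔭 : 𝔭.IsPrime) (h𝔮 : 𝔮.IsPrime) (hne : 𝔭 ≠ 𝔮)
    (hN𝔭 : Ideal.absNorm 𝔭 = 2) (hN𝔮 : Ideal.absNorm 𝔮 = 2)
    (hfact : Ideal.span {(2 : 𝓞 K)} = 𝔭 * 𝔮 ^ 5)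
    (hclass : Nat.card (ClassGroup (𝓞 K)) = 2)
    (hp_np : ¬ 𝔭.IsPrincipal) (hq_np : ¬ 𝔮.IsPrincipal) :
    ¬ ∃ u : K, u ≠ 0 ∧
      (∃ a b : ℤ, FractionalIdeal.spanSingleton (𝓞 K)⁰ u
          = (𝔭 : FractionalIdeal (𝓞 K)⁰ K) ^ a * (𝔮 : FractionalIdeal (𝓞 K)⁰ K) ^ b) ∧
      ∃ c : ℚ, c ≠ 0 ∧ Algebra.norm ℚ u = 2 * c ^ 2 := by
  rintro ⟨u, hu, ⟨a, b, hab⟩, c, hc, hnorm⟩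
  -- 𝔭, 𝔮 are nonzero
  have hp0 : 𝔭 ≠ 0 := by rintro rfl; exact hp_np ⟨0, (Submodule.span_zero_singleton _).symm⟩
  have hq0 : 𝔮 ≠ 0 := by rintro rfl; exact hq_np ⟨0, (Submodule.span_zero_singleton _).symm⟩
  set p0 : (Ideal (𝓞 K))⁰ := ⟨𝔭, mem_nonZeroDivisors_of_ne_zero hp0⟩
  set q0 : (Ideal (𝓞 K))⁰ := ⟨𝔮, mem_nonZeroDivisors_of_ne_zero hq0⟩
  set P := ClassGroup.mk0 p0 with hP
  set Q := ClassGroup.mk0 q0 with hQ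
  have hPne : P ≠ 1 := fun h => hp_np ((ClassGroup.mk0_eq_one_iff p0.2).mp h)
  have hQne : Q ≠ 1 := fun h => hq_np ((ClassGroup.mk0_eq_one_iff q0.2).mp h)
  -- in a group of cardinality 2, P = Q and P^2 = 1
  have hcard : Fintype.card (ClassGroup (𝓞 K)) = 2 := by
    rwa [← Nat.card_eq_fintype_card]
  have hPQ : P = Q := by
    by_contra h
    classical
    have h3 : ({1, P, Q} : Finset (ClassGroup (𝓞 K))).card = 3 := by
      rw [Finset.card_insert_of_notMem (by simp [hPne.symm, hQne.symm]),
        Finset.card_insert_of_notMem (by simp [h]), Finset.card_singleton]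
    have := Finset.card_le_univ ({1, P, Q} : Finset (ClassGroup (𝓞 K)))
    rw [h3, hcard] at this
    omega
  have hP2 : P ^ 2 = 1 := by
    have := pow_card_eq_one' (x := P)
    rwa [hclass] at this
  -- transfer the fractional ideal equation to the class group
  have hss0 : FractionalIdeal.spanSingleton (𝓞 K)⁰ u ≠ 0 := by
    simpa [FractionalIdeal.spanSingleton_eq_zero_iff] using hu
  set Uu : (FractionalIdeal (𝓞 K)⁰ K)ˣ := Units.mk0 _ hss0 with hUu
  have hunits : Uu = (FractionalIdeal.mk0 K p0) ^ a * (FractionalIdeal.mk0 K q0) ^ b := by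
    apply Units.ext
    rw [Units.val_mul, Units.val_zpow_eq_zpow_val, Units.val_zpow_eq_zpow_val]
    simpa [hUu] using hab
  have hmkUu : ClassGroup.mk K Uu = 1 := by
    rw [ClassGroup.mk_eq_one_iff]
    exact ⟨u, by simp [hUu, FractionalIdeal.coe_spanSingleton]⟩
  have hclasseq : P ^ a * Q ^ b = 1 := by
    have h' := congrArg (ClassGroup.mk K) hunits
    rw [hmkUu, map_mul, map_zpow, map_zpow, ClassGroup.mk_mk0, ClassGroup.mk_mk0] at h'
    exact h'.symm
  -- hence a + b is even
  have hPord : orderOf P = 2 := by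
    have hdvd : orderOf P ∣ 2 := orderOf_dvd_of_pow_eq_one hP2
    rcases (Nat.dvd_prime Nat.prime_two).mp hdvd with h | h
    · exact absurd (orderOf_eq_one_iff.mp h) hPne
    · exact h
  have heven : (2 : ℤ) ∣ (a + b) := by
    rw [hPQ] at hclasseq
    have : P ^ (a + b) = 1 := by rw [zpow_add, hPQ]; exact hclasseq
    have := orderOf_dvd_iff_zpow_eq_one.mpr this
    rwa [hPord] at this
  -- norms
  have habs : |Algebra.norm ℚ u| = (2 : ℚ) ^ (a + b) := by
    rw [← FractionalIdeal.absNorm_span_singleton (𝓞 K), hab, map_mul, map_zpow₀, map_zpow₀,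
      FractionalIdeal.coeIdeal_absNorm, FractionalIdeal.coeIdeal_absNorm, hN𝔭, hN𝔮]
    push_cast
    rw [← zpow_add₀ (by norm_num : (2:ℚ) ≠ 0)]
  have hpos : (0:ℚ) < 2 * c ^ 2 := by positivity
  rw [hnorm, abs_of_pos hpos] at habs
  -- 2-adic valuation contradiction
  have hval := congrArg (padicValRat 2) habs
  rw [padicValRat.mul (by norm_num) (by positivity), padicValRat_two_self,
    padicValRat.pow, padicValRat_two_zpow] at hval
  omega
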